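/- For 0 = t₁ < t₂ < π, the Jacobian determinant of the chord-angle map Q(t₁,t₂) = (α(t₁,t₂), β(t₁,t₂)) for the rectangular elastica R is strictly negative; specifically it equals (2 sin t₂ / (l² √(1+sin²t₂)))·(−Δξ) < 0 where l = |R(t₂) − R(0)| and Δξ = ξ(t₂) − ξ(0) > 0. -/

import Mathlib

open Real Complex

noncomputable def xi (t : ℝ) : ℝ :=
  ∫ τ in (0:ℝ)..t, Real.sin τ ^ 2 / Real.sqrt (1 + Real.sin τ ^ 2)

noncomputable def R (t : ℝ) : ℂ := (Real.sin t : ℂ) + Complex.I * (xi t : ℂ)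

noncomputable def alphaAng (t₁ t₂ : ℝ) : ℝ := Complex.arg (deriv R t₁ / (R t₂ - R t₁))
noncomputable def betaAng (t₁ t₂ : ℝ) : ℝ := Complex.arg (deriv R t₂ / (R t₂ - R t₁))

/-- The Jacobian determinant of the chord-angle map `(t₁,t₂) ↦ (α,β)`. -/
noncomputable def detDQ (t₁ t₂ : ℝ) : ℝ :=
  deriv (fun s => alphaAng s t₂) t₁ * deriv (fun s => betaAng t₁ s) t₂
    - deriv (fun s => alphaAng t₁ s) t₂ * deriv (fun s => betaAng s t₂) t₁

/- ### Auxiliary definitions and lemmas -/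

noncomputable def gfun (t : ℝ) : ℝ := Real.sin t ^ 2 / Real.sqrt (1 + Real.sin t ^ 2)

noncomputable def Gfun (t : ℝ) : ℝ :=
  Real.sin t * Real.cos t * (2 + Real.sin t ^ 2) /
    ((1 + Real.sin t ^ 2) * Real.sqrt (1 + Real.sin t ^ 2))

lemma one_add_sin_sq_pos (t : ℝ) : 0 < 1 + Real.sin t ^ 2 := by positivity

lemma sqrt_one_add_sin_sq_pos (t : ℝ) : 0 < Real.sqrt (1 + Real.sin t ^ 2) :=
  Real.sqrt_pos.mpr (one_add_sin_sq_pos t)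

lemma gfun_cont : Continuous gfun := by
  apply Continuous.div (by continuity) (by continuity)
  intro t
  exact ne_of_gt (sqrt_one_add_sin_sq_pos t)

lemma hxi (t : ℝ) : HasDerivAt xi (gfun t) t := by
  exact intervalIntegral.integral_hasDerivAt_right (gfun_cont.intervalIntegrable 0 t)
    (gfun_cont.stronglyMeasurableAtFilter _ _)
    gfun_cont.continuousAt

lemma hR (t : ℝ) : HasDerivAt R ((Real.cos t : ℂ) + Complex.I * (gfun t : ℂ)) t := by
  have h1 : HasDerivAt (fun t : ℝ => ((Real.sin t : ℝ) : ℂ)) ((Real.cos t : ℝ) : ℂ) t :=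
    Complex.ofRealCLM.hasFDerivAt.comp_hasDerivAt t (Real.hasDerivAt_sin t)
  have h2 : HasDerivAt (fun t : ℝ => ((xi t : ℝ) : ℂ)) ((gfun t : ℝ) : ℂ) t :=
    Complex.ofRealCLM.hasFDerivAt.comp_hasDerivAt t (hxi t)
  exact h1.add (h2.const_mul Complex.I)

lemma derivR : deriv R = fun t => (Real.cos t : ℂ) + Complex.I * (gfun t : ℂ) :=
  funext fun t => (hR t).deriv

lemma hgfun (t : ℝ) : HasDerivAt gfun (Gfun t) t := by
  have hq : 0 < Real.sqrt (1 + Real.sin t ^ 2) := sqrt_one_add_sin_sq_pos t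
  have hnum : HasDerivAt (fun t => Real.sin t ^ 2) (2 * Real.sin t * Real.cos t) t := by
    have h : HasDerivAt (fun t => Real.sin t ^ 2) _ t := (Real.hasDerivAt_sin t).pow 2
    simpa [mul_comm, mul_assoc] using h
  have hv : HasDerivAt (fun t => 1 + Real.sin t ^ 2) (2 * Real.sin t * Real.cos t) t :=
    (hnum.const_add 1)
  have hden : HasDerivAt (fun t => Real.sqrt (1 + Real.sin t ^ 2))
      (2 * Real.sin t * Real.cos t / (2 * Real.sqrt (1 + Real.sin t ^ 2))) t := by
    have : HasDerivAt (fun t => Real.sqrt (1 + Real.sin t ^ 2)) _ t :=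
      (Real.hasDerivAt_sqrt (ne_of_gt (one_add_sin_sq_pos t))).comp t hv
    simpa [mul_comm, div_eq_mul_inv, mul_assoc] using this
  have hdiv := hnum.div hden (ne_of_gt hq)
  refine hdiv.congr_deriv ?_
  symm
  have hq2 : Real.sqrt (1 + Real.sin t ^ 2) ^ 2 = 1 + Real.sin t ^ 2 :=
    Real.sq_sqrt (le_of_lt (one_add_sin_sq_pos t))
  set q := Real.sqrt (1 + Real.sin t ^ 2) with hqdef
  have h4 : Real.sin t ^ 2 = q ^ 2 - 1 := by rw [hq2]; ring
  simp only [Gfun, ← hqdef, h4]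
  field_simp
  rw [add_sub_cancel, Real.sqrt_sq hq.le]
  field_simp
  ring

lemma hdR2 (t : ℝ) : HasDerivAt (deriv R) ((-Real.sin t : ℂ) + Complex.I * (Gfun t : ℂ)) t := by
  rw [derivR]
  have h1 : HasDerivAt (fun t : ℝ => ((Real.cos t : ℝ) : ℂ)) ((-Real.sin t : ℝ) : ℂ) t :=
    Complex.ofRealCLM.hasFDerivAt.comp_hasDerivAt t (Real.hasDerivAt_cos t)
  have h2 : HasDerivAt (fun t : ℝ => ((gfun t : ℝ) : ℂ)) ((Gfun t : ℝ) : ℂ) t :=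
    Complex.ofRealCLM.hasFDerivAt.comp_hasDerivAt t (hgfun t)
  have h3 : HasDerivAt (fun t => ((Real.cos t : ℝ) : ℂ) + Complex.I * ((gfun t : ℝ) : ℂ)) _ t :=
    h1.add (h2.const_mul Complex.I)
  simpa using h3

lemma hasDerivAt_arg' {f : ℝ → ℂ} {f' : ℂ} {x : ℝ} (hf : HasDerivAt f f' x)
    (h : f x ∈ Complex.slitPlane) :
    HasDerivAt (fun t => (f t).arg) ((f' / f x).im) x := by
  have hlog : HasDerivAt (fun t => Complex.log (f t)) ((f x)⁻¹ * f') x :=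
    (Complex.hasDerivAt_log h).comp x hf
  have him := Complex.imCLM.hasFDerivAt.comp_hasDerivAt x hlog
  simp only [Function.comp_def] at him
  have : (fun t => Complex.imCLM (Complex.log (f t))) = fun t => (f t).arg := by
    funext t; simp [Complex.log_im]
  rw [this] at him
  refine him.congr_deriv ?_
  symm
  simp [div_eq_mul_inv, mul_comm]

lemma xi_zero : xi 0 = 0 := intervalIntegral.integral_same

lemma R_zero : R 0 = 0 := by simp [R, xi_zero]

lemma gfun_zero : gfun 0 = 0 := by simp [gfun]

lemma Gfun_zero : Gfun 0 = 0 := by simp [Gfun]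

lemma derivR_zero : deriv R 0 = 1 := by
  rw [derivR]; simp [gfun_zero]

theorem detDQ_neg_on_boundary (t₂ : ℝ) (h1 : 0 < t₂) (h2 : t₂ < π) :
    detDQ 0 t₂ =
      (2 * Real.sin t₂ /
        (‖R t₂ - R 0‖ ^ 2 * Real.sqrt (1 + Real.sin t₂ ^ 2)))
        * (-(xi t₂ - xi 0)) ∧
    detDQ 0 t₂ < 0 := by
  have hs : 0 < Real.sin t₂ := Real.sin_pos_of_pos_of_lt_pi h1 h2
  have hq : 0 < Real.sqrt (1 + Real.sin t₂ ^ 2) := sqrt_one_add_sin_sq_pos t₂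
  have hq2 : Real.sqrt (1 + Real.sin t₂ ^ 2) ^ 2 = 1 + Real.sin t₂ ^ 2 :=
    Real.sq_sqrt (le_of_lt (one_add_sin_sq_pos t₂))
  have hx : 0 < xi t₂ := by
    apply intervalIntegral.intervalIntegral_pos_of_pos_on
      (gfun_cont.intervalIntegrable 0 t₂) _ h1
    intro τ hτ
    have hsτ : 0 < Real.sin τ :=
      Real.sin_pos_of_pos_of_lt_pi hτ.1 (lt_trans hτ.2 h2)
    exact div_pos (by positivity) (sqrt_one_add_sin_sq_pos τ)
  have hgv : 0 < gfun t₂ := div_pos (by positivity) hq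
  -- basic complex facts
  set c : ℂ := R t₂ with hcdef
  have hcre : c.re = Real.sin t₂ := by
    simp only [hcdef, R, Complex.add_re, Complex.mul_re, Complex.I_re, Complex.I_im,
      Complex.ofReal_re, Complex.ofReal_im]; ring
  have hcim : c.im = xi t₂ := by
    simp only [hcdef, R, Complex.add_im, Complex.mul_im, Complex.I_re, Complex.I_im,
      Complex.ofReal_re, Complex.ofReal_im]; ring
  have hnpos : 0 < Complex.normSq c := by
    rw [Complex.normSq_apply, hcre, hcim]; positivity
  have hc : c ≠ 0 := by
    intro h; rw [h] at hnpos; simp at hnpos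
  set r2 : ℂ := deriv R t₂ with hr2def
  have hr2re : r2.re = Real.cos t₂ := by
    rw [hr2def, derivR]
    simp only [Complex.add_re, Complex.mul_re, Complex.I_re, Complex.I_im,
      Complex.ofReal_re, Complex.ofReal_im]; ring
  have hr2im : r2.im = gfun t₂ := by
    rw [hr2def, derivR]
    simp only [Complex.add_im, Complex.mul_im, Complex.I_re, Complex.I_im,
      Complex.ofReal_re, Complex.ofReal_im]; ring
  have hr2ne : r2 ≠ 0 := by
    intro h
    rw [h] at hr2im
    simp at hr2im
    exact absurd hr2im.symm hgv.ne'
  -- slit plane membership of r2 / c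
  have hslit_rc : r2 / c ∈ Complex.slitPlane := by
    rw [Complex.mem_slitPlane_iff]
    rcases le_or_gt 0 (Real.cos t₂) with hcv | hcv
    · left
      rw [Complex.div_re, hcre, hcim, hr2re, hr2im]
      have : 0 < gfun t₂ * xi t₂ / Complex.normSq c := by positivity
      have h2' : 0 ≤ Real.cos t₂ * Real.sin t₂ / Complex.normSq c := by positivity
      linarith
    · right
      rw [Complex.div_im, hcre, hcim, hr2re, hr2im]
      have hA : 0 < gfun t₂ * Real.sin t₂ / Complex.normSq c := by positivity
      have hB : Real.cos t₂ * xi t₂ / Complex.normSq c < 0 :=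
        div_neg_of_neg_of_pos (mul_neg_of_neg_of_pos hcv hx) hnpos
      intro habs
      linarith [habs]
  have hslit_inv : (1 : ℂ) / c ∈ Complex.slitPlane := by
    rw [Complex.mem_slitPlane_iff]
    left
    rw [one_div, Complex.inv_re, hcre]
    positivity
  -- second derivative of R at 0 is 0
  have hdR2_0 : HasDerivAt (deriv R) 0 0 := by
    have := hdR2 0
    simpa [Gfun_zero] using this
  -- A : ∂α/∂t₁ at (0,t₂)
  have hR0' : HasDerivAt R 1 0 := by simpa [gfun_zero] using hR 0
  have hcne' : R t₂ - R 0 ≠ 0 := by rw [R_zero, sub_zero]; exact hc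
  have hfA : HasDerivAt (fun s => deriv R s / (R t₂ - R s)) (1 / c ^ 2) 0 := by
    have := hdR2_0.div (hR0'.const_sub (R t₂)) hcne'
    refine this.congr_deriv ?_
    symm
    rw [R_zero, sub_zero, derivR_zero, ← hcdef]
    field_simp
    ring
  have hslitA : deriv R 0 / (R t₂ - R 0) ∈ Complex.slitPlane := by
    rw [derivR_zero, R_zero, sub_zero]; exact hslit_inv
  have hargA := hasDerivAt_arg' hfA hslitA
  have hvA : (1 / c ^ 2 / (deriv R 0 / (R t₂ - R 0))) = c⁻¹ := by
    rw [derivR_zero, R_zero, sub_zero, ← hcdef]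
    field_simp
  rw [hvA] at hargA
  -- D : ∂β/∂t₁ at (0,t₂)
  have hfD : HasDerivAt (fun s => deriv R t₂ / (R t₂ - R s)) (r2 / c ^ 2) 0 := by
    have := (hasDerivAt_const (0:ℝ) (deriv R t₂)).div (hR0'.const_sub (R t₂)) hcne'
    refine this.congr_deriv ?_
    symm
    rw [R_zero, sub_zero, ← hcdef, ← hr2def]
    field_simp
    ring
  have hslitD : deriv R t₂ / (R t₂ - R 0) ∈ Complex.slitPlane := by
    rw [R_zero, sub_zero, ← hcdef, ← hr2def]; exact hslit_rc
  have hargD := hasDerivAt_arg' hfD hslitD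
  have hvD : (r2 / c ^ 2 / (deriv R t₂ / (R t₂ - R 0))) = c⁻¹ := by
    rw [R_zero, sub_zero, ← hcdef, ← hr2def]
    field_simp
  rw [hvD] at hargD
  -- C : ∂α/∂t₂ at (0,t₂)
  have hfC : HasDerivAt (fun s => deriv R 0 / (R s - R 0)) (-(r2 / c ^ 2)) t₂ := by
    have := (hasDerivAt_const (t₂:ℝ) (deriv R 0)).div ((hR t₂).sub_const (R 0)) hcne'
    refine this.congr_deriv ?_
    symm
    rw [R_zero, sub_zero, derivR_zero, ← hcdef]
    have : (↑(Real.cos t₂) + Complex.I * ↑(gfun t₂)) = r2 := by rw [hr2def, derivR]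
    rw [this]
    field_simp
    ring
  have hslitC : deriv R 0 / (R t₂ - R 0) ∈ Complex.slitPlane := hslitA
  have hargC := hasDerivAt_arg' hfC hslitC
  have hvC : (-(r2 / c ^ 2) / (deriv R 0 / (R t₂ - R 0))) = -(r2 / c) := by
    rw [derivR_zero, R_zero, sub_zero, ← hcdef]
    field_simp
  rw [hvC] at hargC
  -- B : ∂β/∂t₂ at (0,t₂)
  set r2' : ℂ := (-Real.sin t₂ : ℂ) + Complex.I * (Gfun t₂ : ℂ) with hr2'def
  have hfB : HasDerivAt (fun s => deriv R s / (R s - R 0))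
      ((r2' * c - r2 * r2) / c ^ 2) t₂ := by
    have := (hdR2 t₂).div ((hR t₂).sub_const (R 0)) hcne'
    refine this.congr_deriv ?_
    symm
    rw [R_zero, sub_zero, ← hcdef]
    have h5 : (↑(Real.cos t₂) + Complex.I * ↑(gfun t₂)) = r2 := by rw [hr2def, derivR]
    rw [h5, ← hr2'def]
  have hslitB : deriv R t₂ / (R t₂ - R 0) ∈ Complex.slitPlane := hslitD
  have hargB := hasDerivAt_arg' hfB hslitB
  have hvB : ((r2' * c - r2 * r2) / c ^ 2 / (deriv R t₂ / (R t₂ - R 0)))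
      = r2' / r2 - r2 / c := by
    rw [R_zero, sub_zero, ← hcdef, ← hr2def]
    field_simp
  rw [hvB] at hargB
  -- assemble the four partial derivatives
  have dA : deriv (fun s => alphaAng s t₂) 0 = (c⁻¹).im := by
    simp only [alphaAng]
    exact hargA.deriv
  have dD : deriv (fun s => betaAng s t₂) 0 = (c⁻¹).im := by
    simp only [betaAng]
    exact hargD.deriv
  have dC : deriv (fun s => alphaAng 0 s) t₂ = (-(r2 / c)).im := by
    simp only [alphaAng]
    exact hargC.deriv
  have dB : deriv (fun s => betaAng 0 s) t₂ = (r2' / r2 - r2 / c).im := by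
    simp only [betaAng]
    exact hargB.deriv
  have hdet : detDQ 0 t₂ = (c⁻¹).im * (r2' / r2).im := by
    rw [detDQ, dA, dB, dC, dD, Complex.sub_im, Complex.neg_im]
    ring
  -- real-part computations
  have hr2're : r2'.re = -Real.sin t₂ := by
    rw [hr2'def]
    simp only [Complex.add_re, Complex.mul_re, Complex.I_re, Complex.I_im,
      Complex.ofReal_re, Complex.ofReal_im, Complex.neg_re]
    ring
  have hr2'im : r2'.im = Gfun t₂ := by
    rw [hr2'def]
    simp only [Complex.add_im, Complex.mul_im, Complex.I_re, Complex.I_im,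
      Complex.ofReal_re, Complex.ofReal_im, Complex.neg_im]
    ring
  have hnormr2 : Complex.normSq r2 = Real.cos t₂ ^ 2 + gfun t₂ ^ 2 := by
    rw [Complex.normSq_apply, hr2re, hr2im]; ring
  have him1 : (c⁻¹).im = -(xi t₂) / Complex.normSq c := by
    rw [Complex.inv_im, hcim]
  have him2 : (r2' / r2).im =
      (Gfun t₂ * Real.cos t₂ + Real.sin t₂ * gfun t₂) / (Real.cos t₂ ^ 2 + gfun t₂ ^ 2) := by
    rw [Complex.div_im, hnormr2, hr2're, hr2'im, hr2re, hr2im]; ring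
  set q := Real.sqrt (1 + Real.sin t₂ ^ 2) with hqdef
  have hgv2 : gfun t₂ ^ 2 = Real.sin t₂ ^ 4 / (1 + Real.sin t₂ ^ 2) := by
    rw [gfun, div_pow, ← hqdef, hq2]; ring_nf
  have k1 : Real.cos t₂ ^ 2 + gfun t₂ ^ 2 = 1 / (1 + Real.sin t₂ ^ 2) := by
    rw [hgv2]
    field_simp
    linear_combination (1 + Real.sin t₂ ^ 2) * (Real.sin_sq_add_cos_sq t₂)
  have hnum2 : Real.sin t₂ * Real.cos t₂ ^ 2 * (2 + Real.sin t₂ ^ 2)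
      + Real.sin t₂ ^ 3 * (1 + Real.sin t₂ ^ 2) = 2 * Real.sin t₂ := by
    linear_combination (Real.sin t₂ * (2 + Real.sin t₂ ^ 2)) * Real.sin_sq_add_cos_sq t₂
  have k2 : Gfun t₂ * Real.cos t₂ + Real.sin t₂ * gfun t₂
      = 2 * Real.sin t₂ / ((1 + Real.sin t₂ ^ 2) * q) := by
    rw [Gfun, gfun, ← hqdef, ← hnum2]
    field_simp
  have heq : detDQ 0 t₂ =
      (2 * Real.sin t₂ /
        (‖R t₂ - R 0‖ ^ 2 * Real.sqrt (1 + Real.sin t₂ ^ 2)))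
        * (-(xi t₂ - xi 0)) := by
    rw [hdet, him1, him2, k1, k2, R_zero, sub_zero, ← hcdef, Complex.sq_norm,
      xi_zero, ← hqdef]
    have h1s : (1 + Real.sin t₂ ^ 2) ≠ 0 := (one_add_sin_sq_pos t₂).ne'
    field_simp
    ring
  refine ⟨heq, ?_⟩
  rw [heq, R_zero, sub_zero, ← hcdef, Complex.sq_norm, xi_zero, ← hqdef]
  apply mul_neg_of_pos_of_neg
  · apply div_pos (by linarith)
    exact mul_pos hnpos hq
  · linarith
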